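/- (Main nonsingularity theorem) In the Uvarov setting with u and û = u + v both quasidefinite, if either Ker^R_β⊥-condition (Ker^R_β)^{⊥_u^R} = {0_p} or the ideal condition 𝕀^{⊥_u^L} = {0_p} holds, then for every n the matrix I_{Np} + ⟨𝒥^{[0,1]}_{K_{n−1}}(x),(β)_x⟩ ∈ ℂ^{Np×Np} is invertible. -/

import Mathlib

open Polynomial Matrix Finset

namespace Paper

abbrev Mat (p : ℕ) := Matrix (Fin p) (Fin p) ℂ
abbrev MatPoly (p : ℕ) := Matrix (Fin p) (Fin p) (Polynomial ℂ)

variable {p : ℕ}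

/-- Embed a constant matrix as a matrix polynomial. -/
noncomputable def cm (A : Mat p) : MatPoly p := A.map Polynomial.C

/-- The monomial `I_p x^k` as a matrix polynomial. -/
noncomputable def monoM (p k : ℕ) : MatPoly p := Matrix.diagonal (fun _ => (Polynomial.X : Polynomial ℂ) ^ k)

/-- The `k`-th matrix coefficient of a matrix polynomial. -/
noncomputable def coeffM (P : MatPoly p) (k : ℕ) : Mat p := Matrix.of fun i j => (P i j).coeff k

/-- Entrywise derivative of a matrix polynomial. -/
noncomputable def dM : MatPoly p → MatPoly p := fun P => Matrix.of fun i j => Polynomial.derivative (P i j)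

/-- Evaluation of a matrix polynomial at a scalar point. -/
noncomputable def evM (z : ℂ) (P : MatPoly p) : Mat p := Matrix.of fun i j => (P i j).eval z

/-- `P` is monic of exact degree `n`. -/
def MonicDeg (P : MatPoly p) (n : ℕ) : Prop :=
  coeffM P n = 1 ∧ ∀ k, n < k → coeffM P k = 0

/-- Sesquilinear form on matrix polynomials: left `ℂ^{p×p}`-linear in the first slot,
`⟨P, AQ + R⟩ = ⟨P,Q⟩Aᵀ + ⟨P,R⟩` in the second slot. -/
def IsSesq (S : MatPoly p → MatPoly p → Mat p) : Prop :=
  (∀ (A : Mat p) (P Q R : MatPoly p), S (cm A * P + Q) R = A * S P R + S Q R) ∧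
  (∀ (A : Mat p) (P Q R : MatPoly p), S P (cm A * Q + R) = S P Q * Aᵀ + S P R)

end Paper

namespace Paper

variable {p : ℕ}

/-- Jet index set: pairs (point j, derivative order m < κ j). -/
abbrev JIdx (q : ℕ) (κ : Fin q → ℕ) := Σ j : Fin q, Fin (κ j)

/-- The `a`-th `p×p` block (a jet index) of the column jet `𝒥^{[0,1]}_{K_{n-1}}(x)`:
the `y`-jet of the Christoffel–Darboux kernel `K_{n-1}(x,y)` at the point `xpt a.1`,
derivative order `a.2`, divided by `(a.2)!`; a matrix polynomial in `x`. -/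
noncomputable def KBlock {q : ℕ} {κ : Fin q → ℕ} (P1 P2 : ℕ → MatPoly p) (H : ℕ → Mat p)
    (xpt : Fin q → ℂ) (n : ℕ) (a : JIdx q κ) : MatPoly p :=
  ∑ k ∈ Finset.range n,
    cm ((((Nat.factorial (a.2 : ℕ) : ℂ))⁻¹ • evM (xpt a.1) (dM^[(a.2 : ℕ)] (P2 k)))ᵀ * (H k)⁻¹)
      * P1 k

/-- The `Np×Np` matrix of pairings `⟨𝒥^{[0,1]}_{K_{n-1}}(x), (β)_x⟩`. -/
noncomputable def PairM {q : ℕ} {κ : Fin q → ℕ} (β : JIdx q κ → MatPoly p → Mat p)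
    (P1 P2 : ℕ → MatPoly p) (H : ℕ → Mat p) (xpt : Fin q → ℂ) (n : ℕ) :
    Matrix (JIdx q κ × Fin p) (JIdx q κ × Fin p) ℂ :=
  Matrix.of fun a b => (β b.1 (KBlock P1 P2 H xpt n a.1)) a.2 b.2

/-- The `p×Np` row of pairings `⟨P(x), (β)_x⟩`. -/
noncomputable def RowB {q : ℕ} {κ : Fin q → ℕ} (β : JIdx q κ → MatPoly p → Mat p)
    (P : MatPoly p) : Matrix (Fin p) (JIdx q κ × Fin p) ℂ :=
  Matrix.of fun s b => (β b.1 P) s b.2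

/-- The `p×Np` spectral jet `𝒥_f` of a matrix polynomial at the points `xpt j`,
with multiplicities `κ j`. -/
noncomputable def JetRow {q : ℕ} (κ : Fin q → ℕ) (xpt : Fin q → ℂ) (f : MatPoly p) :
    Matrix (Fin p) (JIdx q κ × Fin p) ℂ :=
  Matrix.of fun s a =>
    ((Nat.factorial (a.1.2 : ℕ) : ℂ)⁻¹ • evM (xpt a.1.1) (dM^[(a.1.2 : ℕ)] f)) s a.2

/-- The `Np×p` jet `𝒥^{[0,1]}_{K_{n-1}}(x)` as a matrix with polynomial entries. -/
noncomputable def Jet01 {q : ℕ} (κ : Fin q → ℕ) (P1 P2 : ℕ → MatPoly p) (H : ℕ → Mat p)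
    (xpt : Fin q → ℂ) (n : ℕ) : Matrix (JIdx q κ × Fin p) (Fin p) (Polynomial ℂ) :=
  Matrix.of fun a t => (KBlock (κ := κ) P1 P2 H xpt n a.1) a.2 t

end Paper

namespace Paper

noncomputable def Wpol {q : ℕ} (κ : Fin q → ℕ) (xpt : Fin q → ℂ) : Polynomial ℂ :=
  ∏ j : Fin q, (Polynomial.X - Polynomial.C (xpt j)) ^ (κ j)

noncomputable def Wmat (p : ℕ) {q : ℕ} (κ : Fin q → ℕ) (xpt : Fin q → ℂ) : MatPoly p :=
  Matrix.diagonal fun _ => Wpol κ xpt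

end Paper

namespace Paper

variable {p : ℕ}

lemma cm_one : cm (1 : Mat p) = 1 := by
  ext i j
  by_cases h : i = j <;> simp [cm, Matrix.one_apply, h]

lemma cm_zero : cm (0 : Mat p) = 0 := by
  ext i j; simp [cm]

lemma coeffM_entry (P : MatPoly p) (k : ℕ) (i j : Fin p) :
    coeffM P k i j = (P i j).coeff k := rfl

lemma coeffM_sub (P Q : MatPoly p) (k : ℕ) :
    coeffM (P - Q) k = coeffM P k - coeffM Q k := by
  ext i j; simp [coeffM, Matrix.sub_apply]

lemma coeffM_cm_mul (A : Mat p) (Q : MatPoly p) (k : ℕ) :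
    coeffM (cm A * Q) k = A * coeffM Q k := by
  ext i j
  simp [coeffM, cm, Matrix.mul_apply, Polynomial.finset_sum_coeff,
    Polynomial.coeff_C_mul]

lemma coeffM_sum {ι : Type*} (s : Finset ι) (f : ι → MatPoly p) (k : ℕ) :
    coeffM (∑ a ∈ s, f a) k = ∑ a ∈ s, coeffM (f a) k := by
  ext i j
  simp [coeffM, Matrix.sum_apply, Polynomial.finset_sum_coeff]

lemma eq_zero_of_coeffM (P : MatPoly p) (h : ∀ k, coeffM P k = 0) : P = 0 := by
  refine Matrix.ext fun i j => Polynomial.ext fun k => ?_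
  have h2 := congrFun (congrFun (h k) i) j
  simpa [coeffM, Matrix.zero_apply] using h2

/-- `P` has all matrix coefficients of index `≥ n` zero. -/
def DegLt (P : MatPoly p) (n : ℕ) : Prop := ∀ k, n ≤ k → coeffM P k = 0

lemma DegLt.mono {P : MatPoly p} {n n' : ℕ} (h : DegLt P n) (hn : n ≤ n') : DegLt P n' :=
  fun k hk => h k (le_trans hn hk)

lemma MonicDeg.degLt {P : MatPoly p} {n : ℕ} (h : MonicDeg P n) : DegLt P (n + 1) :=
  fun k hk => h.2 k (by omega)

/-- Any matrix polynomial with vanishing coefficients `≥ n` lies in the left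
span of a monic-degree family `B 0, …, B (n-1)`. -/
lemma span_basis (B : ℕ → MatPoly p) (hB : ∀ k, MonicDeg (B k) k) :
    ∀ (n : ℕ) (P : MatPoly p), DegLt P n →
      ∃ c : ℕ → Mat p, P = ∑ k ∈ Finset.range n, cm (c k) * B k := by
  intro n
  induction n with
  | zero =>
    intro P hP
    exact ⟨fun _ => 0, by
      simpa using eq_zero_of_coeffM P fun k => hP k (Nat.zero_le k)⟩
  | succ n ih =>
    intro P hP
    have hdeg : DegLt (P - cm (coeffM P n) * B n) n := by
      intro k hk
      rcases eq_or_lt_of_le hk with rfl | hlt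
      · rw [coeffM_sub, coeffM_cm_mul, (hB n).1, mul_one, sub_self]
      · rw [coeffM_sub, coeffM_cm_mul, (hB n).2 k hlt, mul_zero, sub_zero]
        exact hP k (by omega)
    obtain ⟨c, hc⟩ := ih (P - cm (coeffM P n) * B n) hdeg
    refine ⟨Function.update c n (coeffM P n), ?_⟩
    rw [Finset.sum_range_succ]
    have hs : ∑ k ∈ Finset.range n, cm (Function.update c n (coeffM P n) k) * B k
        = ∑ k ∈ Finset.range n, cm (c k) * B k :=
      Finset.sum_congr rfl fun k hk => by
        rw [Function.update_of_ne (Finset.mem_range.1 hk).ne]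
    rw [hs, Function.update_self, ← hc, sub_add_cancel]

/-- Left `Mat p`-linearity for a `Mat p`-valued functional. -/
def LLin (T : MatPoly p → Mat p) : Prop :=
  ∀ (A : Mat p) (P Q : MatPoly p), T (cm A * P + Q) = A * T P + T Q

/-- Right (transposed) `Mat p`-linearity for a `Mat p`-valued functional. -/
def RLin (T : MatPoly p → Mat p) : Prop :=
  ∀ (A : Mat p) (Q R : MatPoly p), T (cm A * Q + R) = T Q * Aᵀ + T R

lemma LLin.zero {T : MatPoly p → Mat p} (h : LLin T) : T 0 = 0 := by
  have h0 := h 1 0 0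
  simp only [cm_one, one_mul, add_zero] at h0
  exact (add_eq_left.mp h0.symm)

lemma LLin.add {T : MatPoly p → Mat p} (h : LLin T) (P Q : MatPoly p) :
    T (P + Q) = T P + T Q := by
  have := h 1 P Q
  rwa [cm_one, one_mul, one_mul] at this

lemma LLin.smul {T : MatPoly p → Mat p} (h : LLin T) (A : Mat p) (P : MatPoly p) :
    T (cm A * P) = A * T P := by
  have := h A P 0
  rwa [add_zero, h.zero, add_zero] at this

lemma LLin.sum {T : MatPoly p → Mat p} (h : LLin T) {ι : Type*} (s : Finset ι)
    (c : ι → Mat p) (P : ι → MatPoly p) :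
    T (∑ k ∈ s, cm (c k) * P k) = ∑ k ∈ s, c k * T (P k) := by
  classical
  induction s using Finset.induction with
  | empty => simpa using h.zero
  | insert _ _ hx ih =>
    rw [Finset.sum_insert hx, Finset.sum_insert hx, h, ih]

lemma RLin.zero {T : MatPoly p → Mat p} (h : RLin T) : T 0 = 0 := by
  have h0 := h 1 0 0
  simp only [cm_one, one_mul, add_zero, Matrix.transpose_one, mul_one] at h0
  exact (add_eq_left.mp h0.symm)

lemma RLin.smul {T : MatPoly p → Mat p} (h : RLin T) (A : Mat p) (P : MatPoly p) :
    T (cm A * P) = T P * Aᵀ := by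
  have := h A P 0
  rwa [add_zero, h.zero, add_zero] at this

lemma RLin.sum {T : MatPoly p → Mat p} (h : RLin T) {ι : Type*} (s : Finset ι)
    (c : ι → Mat p) (P : ι → MatPoly p) :
    T (∑ k ∈ s, cm (c k) * P k) = ∑ k ∈ s, T (P k) * (c k)ᵀ := by
  classical
  induction s using Finset.induction with
  | empty => simpa using h.zero
  | insert _ _ hx ih =>
    rw [Finset.sum_insert hx, Finset.sum_insert hx, h, ih]

/- Derivative and evaluation lemmas. -/

lemma dM_add (P Q : MatPoly p) : dM (P + Q) = dM P + dM Q := by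
  ext i j; simp [dM, Matrix.add_apply]

lemma dM_cm_mul (A : Mat p) (P : MatPoly p) : dM (cm A * P) = cm A * dM P := by
  ext i j
  simp [dM, cm, Matrix.mul_apply, map_sum, Polynomial.derivative_C_mul]

lemma dM_iter_add (m : ℕ) (P Q : MatPoly p) :
    dM^[m] (P + Q) = dM^[m] P + dM^[m] Q := by
  induction m generalizing P Q with
  | zero => simp
  | succ m ih => simp [Function.iterate_succ_apply, dM_add, ih]

lemma dM_iter_cm_mul (m : ℕ) (A : Mat p) (P : MatPoly p) :
    dM^[m] (cm A * P) = cm A * dM^[m] P := by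
  induction m generalizing P with
  | zero => simp
  | succ m ih => simp [Function.iterate_succ_apply, dM_cm_mul, ih]

lemma dM_transpose (P : MatPoly p) : dM Pᵀ = (dM P)ᵀ := by
  ext i j; simp [dM]

lemma dM_iter_transpose (m : ℕ) (P : MatPoly p) : dM^[m] Pᵀ = (dM^[m] P)ᵀ := by
  induction m generalizing P with
  | zero => simp
  | succ m ih => simp [Function.iterate_succ_apply, dM_transpose, ih]

lemma evM_add (z : ℂ) (P Q : MatPoly p) : evM z (P + Q) = evM z P + evM z Q := by
  ext i j; simp [evM, Matrix.add_apply]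

lemma evM_cm_mul (z : ℂ) (A : Mat p) (P : MatPoly p) :
    evM z (cm A * P) = A * evM z P := by
  ext i j
  simp [evM, cm, Matrix.mul_apply, Polynomial.eval_finset_sum]

lemma evM_transpose (z : ℂ) (P : MatPoly p) : evM z Pᵀ = (evM z P)ᵀ := by
  ext i j; simp [evM]

/-- The normalized jet functional `(1/m!) · (d/dx)^m · eval at z`. -/
noncomputable def jetF (z : ℂ) (m : ℕ) (P : MatPoly p) : Mat p :=
  ((Nat.factorial m : ℂ))⁻¹ • evM z (dM^[m] P)

lemma jetF_llin (z : ℂ) (m : ℕ) : LLin (jetF (p := p) z m) := by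
  intro A P Q
  unfold jetF
  rw [dM_iter_add, dM_iter_cm_mul, evM_add, evM_cm_mul, smul_add, mul_smul_comm]

end Paper

open Paper in
/-- main nonsingularity theorem: in the Uvarov setting with `u` and
`û = u + v` both quasidefinite and with linearly independent functionals `β` (given through
their right pairing `β` and left pairing `βL`), if either `(Ker^R_β)^{⊥_u^R} = {0}` or
`𝕀^{⊥_u^L} = {0}`, then for every `n` the matrix
`I_{Np} + ⟨𝒥^{[0,1]}_{K_{n−1}}(x),(β)_x⟩` is invertible. -/
theorem statement16 (p q : ℕ) (κ : Fin q → ℕ) (hκ : ∀ j, 0 < κ j) (xpt : Fin q → ℂ)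
    (hx : Function.Injective xpt)
    (u uh : MatPoly p → MatPoly p → Mat p) (hu : IsSesq u) (huh : IsSesq uh)
    (β : JIdx q κ → MatPoly p → Mat p)
    (hβ : ∀ a (A : Mat p) (P Q : MatPoly p), β a (cm A * P + Q) = A * β a P + β a Q)
    (hv : ∀ P Q : MatPoly p, uh P Q = u P Q + ∑ a : JIdx q κ,
        (Nat.factorial (a.2 : ℕ) : ℂ)⁻¹ • (β a P * evM (xpt a.1) (dM^[(a.2 : ℕ)] Qᵀ)))
    (P1 P2 hP1 hP2 : ℕ → MatPoly p) (H Hh : ℕ → Mat p)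
    (hmon1 : ∀ k, MonicDeg (P1 k) k) (hmon2 : ∀ k, MonicDeg (P2 k) k)
    (hmon1h : ∀ k, MonicDeg (hP1 k) k) (hmon2h : ∀ k, MonicDeg (hP2 k) k)
    (hH : ∀ k, IsUnit (H k)) (hHh : ∀ k, IsUnit (Hh k))
    (hbio : ∀ k l, u (P1 k) (P2 l) = if k = l then H k else 0)
    (hbioh : ∀ k l, uh (hP1 k) (hP2 l) = if k = l then Hh k else 0)
    (n : ℕ)
    (βL : JIdx q κ → MatPoly p → Mat p)
    (hβL : ∀ a (A : Mat p) (P Q : MatPoly p), βL a (P * cm A + Q) = βL a P * A + βL a Q)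
    (hβcomp : ∀ a k, βL a (monoM p k) = β a (monoM p k))
    (hindR : ∀ Xc : JIdx q κ → Mat p,
      (∀ k, ∑ a : JIdx q κ, β a (monoM p k) * Xc a = 0) → ∀ a, Xc a = 0)
    (hindL : ∀ Yc : JIdx q κ → Mat p,
      (∀ k, ∑ a : JIdx q κ, Yc a * β a (monoM p k) = 0) → ∀ a, Yc a = 0)
    (hcond :
      (∀ Q : MatPoly p, (∀ P : MatPoly p, (∀ a, βL a P = 0) → u P Q = 0) → Q = 0) ∨
      (∀ Q : MatPoly p, (∀ R : MatPoly p, u Q (Wmat p κ xpt * R) = 0) → Q = 0)) :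
    ∀ m : ℕ, IsUnit ((1 : Matrix (JIdx q κ × Fin p) (JIdx q κ × Fin p) ℂ)
        + PairM β P1 P2 H xpt m) := by
  classical
  intro m
  set M : Matrix (JIdx q κ × Fin p) (JIdx q κ × Fin p) ℂ := PairM β P1 P2 H xpt m with hMdef
  rw [← Matrix.vecMul_injective_iff_isUnit]
  have key : ∀ y : (JIdx q κ × Fin p) → ℂ, y ᵥ* (1 + M) = 0 → y = 0 := by
    intro y hy
    have h0 : ∀ b, y b + ∑ a : JIdx q κ × Fin p, y a * M a b = 0 := by
      intro b
      have hb := congrFun hy b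
      simpa [Matrix.vecMul, dotProduct, Matrix.add_apply, Matrix.one_apply,
        mul_add, Finset.sum_add_distrib, mul_ite, mul_one, mul_zero,
        Finset.sum_ite_eq'] using hb
    set Ya : JIdx q κ → Mat p := fun a1 => Matrix.of fun _ r => y (a1, r) with hYa
    set G : JIdx q κ → ℕ → Mat p := fun a k =>
      (jetF (xpt a.1) (a.2 : ℕ) (P2 k))ᵀ * (H k)⁻¹ with hG
    have hKB : ∀ a, KBlock (κ := κ) P1 P2 H xpt m a
        = ∑ k ∈ Finset.range m, cm (G a k) * P1 k := fun a => rfl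
    set Q0 : MatPoly p :=
      ∑ a1 : JIdx q κ, cm (Ya a1) * KBlock (κ := κ) P1 P2 H xpt m a1 with hQ0
    have hβlin : ∀ b, LLin (β b) := fun b A P Q => hβ b A P Q
    -- Step 1: β b Q0 = - Ya b.
    have hβQ0 : ∀ b1, β b1 Q0 = - Ya b1 := by
      intro b1
      have hsum := (hβlin b1).sum Finset.univ Ya (KBlock (κ := κ) P1 P2 H xpt m)
      rw [hQ0, hsum]
      refine Matrix.ext fun s t => ?_
      have hb := h0 (b1, t)
      rw [Fintype.sum_prod_type] at hb
      have hMab : ∀ (a1 : JIdx q κ) (r : Fin p),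
          M (a1, r) (b1, t) = (β b1 (KBlock (κ := κ) P1 P2 H xpt m a1)) r t :=
        fun _ _ => by rw [hMdef]; rfl
      calc (∑ a1 : JIdx q κ, Ya a1 * β b1 (KBlock (κ := κ) P1 P2 H xpt m a1)) s t
          = ∑ a1 : JIdx q κ, ∑ r, y (a1, r) *
              (β b1 (KBlock (κ := κ) P1 P2 H xpt m a1)) r t := by
            rw [Matrix.sum_apply]
            exact Finset.sum_congr rfl fun a1 _ => by
              simp [Matrix.mul_apply, hYa]
        _ = ∑ a1 : JIdx q κ, ∑ r, y (a1, r) * M (a1, r) (b1, t) :=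
            Finset.sum_congr rfl fun a1 _ => Finset.sum_congr rfl fun r _ => by
              rw [hMab]
        _ = - y (b1, t) := by linear_combination hb
        _ = (- Ya b1) s t := by simp [hYa]
    -- Step 2: reproducing property of the kernel blocks.
    have hrep : ∀ (a1 : JIdx q κ) (l : ℕ), l < m →
        u (KBlock (κ := κ) P1 P2 H xpt m a1) (P2 l)
          = (jetF (xpt a1.1) (a1.2 : ℕ) (P2 l))ᵀ := by
      intro a1 l hl
      have hL : LLin (fun P => u P (P2 l)) := fun A P Q => hu.1 A P Q (P2 l)
      have h1 := hL.sum (Finset.range m) (G a1) P1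
      rw [hKB a1, h1]
      have h2 : ∀ k, G a1 k * u (P1 k) (P2 l)
          = if k = l then G a1 k * H k else 0 := by
        intro k
        rw [hbio k l]
        by_cases hkl : k = l <;> simp [hkl]
      rw [Finset.sum_congr rfl fun k _ => h2 k,
        Finset.sum_ite_eq' (Finset.range m) l, if_pos (Finset.mem_range.2 hl), hG,
        mul_assoc, Matrix.nonsing_inv_mul (H l)
          ((Matrix.isUnit_iff_isUnit_det _).1 (hH l)), mul_one]
    -- Step 3: u Q0 R for R of degree < m.
    have huQ0 : ∀ R : MatPoly p, DegLt R m →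
        u Q0 R = ∑ a1 : JIdx q κ, Ya a1 * (jetF (xpt a1.1) (a1.2 : ℕ) R)ᵀ := by
      intro R hR
      obtain ⟨c, hc⟩ := span_basis P2 hmon2 m R hR
      have hL : LLin (fun P => u P R) := fun A P Q => hu.1 A P Q R
      have h1 := hL.sum Finset.univ Ya (KBlock (κ := κ) P1 P2 H xpt m)
      rw [hQ0, h1]
      refine Finset.sum_congr rfl fun a1 _ => ?_
      congr 1
      have hRl : RLin (fun R' => u (KBlock (κ := κ) P1 P2 H xpt m a1) R') :=
        fun A Q' R' => hu.2 A (KBlock (κ := κ) P1 P2 H xpt m a1) Q' R'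
      have h2 := hRl.sum (Finset.range m) c P2
      rw [hc, h2, (jetF_llin (xpt a1.1) (a1.2 : ℕ)).sum (Finset.range m) c P2,
        Matrix.transpose_sum]
      refine Finset.sum_congr rfl fun l hl => ?_
      rw [hrep a1 l (Finset.mem_range.1 hl), Matrix.transpose_mul]
    -- Step 4: Q0 has degree < m.
    have hQ0deg : DegLt Q0 m := by
      intro k hk
      rw [hQ0, coeffM_sum]
      refine Finset.sum_eq_zero fun a1 _ => ?_
      have hz : coeffM (∑ k' ∈ Finset.range m, cm (G a1 k') * P1 k') k = 0 := by
        rw [coeffM_sum]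
        exact Finset.sum_eq_zero fun k' hk' => by
          rw [coeffM_cm_mul, (hmon1 k').2 k
            (lt_of_lt_of_le (Finset.mem_range.1 hk') hk), mul_zero]
      rw [coeffM_cm_mul, hKB, hz, mul_zero]
    -- Step 5: uh Q0 R = 0 for R of degree < m.
    have huhQ0 : ∀ R : MatPoly p, DegLt R m → uh Q0 R = 0 := by
      intro R hR
      rw [hv Q0 R, huQ0 R hR]
      have hterm : ∀ a : JIdx q κ,
          ((Nat.factorial (a.2 : ℕ) : ℂ)⁻¹ •
            (β a Q0 * evM (xpt a.1) (dM^[(a.2 : ℕ)] Rᵀ)))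
            = - (Ya a * (jetF (xpt a.1) (a.2 : ℕ) R)ᵀ) := by
        intro a
        rw [dM_iter_transpose, evM_transpose, hβQ0 a]
        simp only [jetF, Matrix.transpose_smul, mul_smul_comm, neg_mul, smul_neg]
      rw [Finset.sum_congr rfl fun a _ => hterm a]
      simp
    -- Step 6: expand Q0 in the hatted basis and conclude Q0 = 0.
    obtain ⟨d, hd⟩ := span_basis hP1 hmon1h m Q0 hQ0deg
    have hd0 : ∀ l ∈ Finset.range m, d l = 0 := by
      intro l hl
      have hdeg : DegLt (hP2 l) m := fun k hk =>
        (hmon2h l).2 k (lt_of_lt_of_le (Finset.mem_range.1 hl) hk)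
      have h1 : uh Q0 (hP2 l) = 0 := huhQ0 _ hdeg
      have hhlin : LLin (fun P => uh P (hP2 l)) := fun A P Q => huh.1 A P Q (hP2 l)
      have h2 := hhlin.sum (Finset.range m) d hP1
      rw [hd, h2] at h1
      have h3 : ∀ k, d k * uh (hP1 k) (hP2 l) = if k = l then d k * Hh k else 0 := by
        intro k
        rw [hbioh k l]
        by_cases hkl : k = l <;> simp [hkl]
      rw [Finset.sum_congr rfl fun k _ => h3 k,
        Finset.sum_ite_eq' (Finset.range m) l, if_pos hl] at h1
      have h4 := congrArg (fun X => X * (Hh l)⁻¹) h1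
      simpa [mul_assoc, Matrix.mul_nonsing_inv (Hh l)
        ((Matrix.isUnit_iff_isUnit_det _).1 (hHh l))] using h4
    have hQ00 : Q0 = 0 := by
      rw [hd]
      exact Finset.sum_eq_zero fun k hk => by rw [hd0 k hk, cm_zero, zero_mul]
    -- Step 7: conclude y = 0.
    have hYa0 : ∀ b1, Ya b1 = 0 := by
      intro b1
      have hb := hβQ0 b1
      rw [hQ00, (hβlin b1).zero] at hb
      simpa [neg_eq_zero] using hb.symm
    funext b
    obtain ⟨b1, t⟩ := b
    have hb := congrFun (congrFun (hYa0 b1) t) t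
    simpa [hYa] using hb
  intro x1 x2 hx12
  have hx12' : x1 ᵥ* (1 + M) = x2 ᵥ* (1 + M) := hx12
  have hsub : (x1 - x2) ᵥ* (1 + M) = 0 := by
    rw [Matrix.sub_vecMul, hx12', sub_self]
  exact sub_eq_zero.mp (key _ hsub)
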